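/- Pseudo-linearization identity for flows (Lemma 8.1 of the survey, stated on a Banach space): Let E be a real Banach space, let V : E → E be continuous and let W : E → E. Suppose ψ : ℝ × E → E is continuously differentiable and is a flow of W, i.e. ψ(0,y) = y and ψ(s+s',y) = ψ(s, ψ(s',y)) for all s,s' ∈ ℝ, y ∈ E, and ∂ψ/∂s(s,y) = W(ψ(s,y)) for all s,y. Let t > 0 and let x : [0,t] → E be differentiable with x'(s) = V(x(s)) for all s ∈ [0,t]. Then ψ(t, x(0)) − x(t) = ∫₀ᵗ D_yψ(t−s, x(s)) [W(x(s)) − V(x(s))] ds, where D_yψ(σ, y) denotes the Fréchet derivative of the map y ↦ ψ(σ, y) at y. -/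

import Mathlib

open MeasureTheory

/-- **Pseudo-linearization identity for flows** (Lemma 8.1 of the survey).
If `ψ` is a `C¹` flow of the vector field `W` on a Banach space `E` and
`x` is an integral curve of `V` on `[0, t]`, then
`ψ(t, x 0) − x t = ∫₀ᵗ D_yψ(t−s, x s) [W(x s) − V(x s)] ds`. -/
theorem pseudo_linearization_identity
    {E : Type*} [NormedAddCommGroup E] [NormedSpace ℝ E] [CompleteSpace E]
    (V : E → E) (hV : Continuous V) (W : E → E)
    (ψ : ℝ × E → E) (hψ : ContDiff ℝ 1 ψ)
    (hflow0 : ∀ y : E, ψ (0, y) = y)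
    (hflowadd : ∀ (s s' : ℝ) (y : E), ψ (s + s', y) = ψ (s, ψ (s', y)))
    (hflowderiv : ∀ (s : ℝ) (y : E), HasDerivAt (fun σ : ℝ => ψ (σ, y)) (W (ψ (s, y))) s)
    (t : ℝ) (ht : 0 < t)
    (x : ℝ → E) (hx : ∀ s ∈ Set.Icc (0 : ℝ) t, HasDerivAt x (V (x s)) s) :
    ψ (t, x 0) - x t =
      ∫ s in (0 : ℝ)..t,
        (fderiv ℝ (fun y : E => ψ (t - s, y)) (x s)) (W (x s) - V (x s)) := by
  set F : ℝ × E → (ℝ × E →L[ℝ] E) := fderiv ℝ ψ with hF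
  have hdiff : Differentiable ℝ ψ := hψ.differentiable one_ne_zero
  have hFcont : Continuous F := hψ.continuous_fderiv one_ne_zero
  -- Fréchet derivative of the partial map `y ↦ ψ (σ, y)`
  have hD : ∀ (σ : ℝ) (y : E), HasFDerivAt (fun y : E => ψ (σ, y))
      ((F (σ, y)).comp (ContinuousLinearMap.inr ℝ ℝ E)) y := fun σ y =>
    (hdiff (σ, y)).hasFDerivAt.comp y (hasFDerivAt_prodMk_right σ y)
  have hDfderiv : ∀ (σ : ℝ) (y : E),
      fderiv ℝ (fun y : E => ψ (σ, y)) y = (F (σ, y)).comp (ContinuousLinearMap.inr ℝ ℝ E) :=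
    fun σ y => (hD σ y).fderiv
  -- partial derivative in time via the full derivative
  have hT : ∀ (σ : ℝ) (y : E), F (σ, y) (1, 0) = W (ψ (σ, y)) := by
    intro σ y
    have h1 : HasDerivAt (fun σ : ℝ => ψ (σ, y)) (F (σ, y) (1, 0)) σ := by
      have := (hdiff (σ, y)).hasFDerivAt.comp_hasDerivAt σ
        ((hasDerivAt_id σ).prodMk (hasDerivAt_const σ y))
      exact this
    exact h1.unique (hflowderiv σ y)
  -- W is continuous
  have hWcont : Continuous W := by
    have : W = fun y => F (0, y) (1, 0) := by
      funext y
      rw [hT 0 y, hflow0]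
    rw [this]
    exact (hFcont.comp (continuous_const.prodMk continuous_id)).clm_apply continuous_const
  -- key identity: D_yψ(σ,y) (W y) = W (ψ (σ, y))
  have hkey : ∀ (σ : ℝ) (y : E), F (σ, y) (0, W y) = W (ψ (σ, y)) := by
    intro σ y
    have h1 : HasDerivAt (fun s' : ℝ => ψ (σ + s', y)) (W (ψ (σ, y))) 0 := by
      have ho : HasDerivAt (fun u : ℝ => ψ (u, y)) (W (ψ (σ, y))) (σ + id 0) := by
        simpa using hflowderiv σ y
      have := ho.scomp 0 ((hasDerivAt_const 0 σ).add (hasDerivAt_id 0))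
      simpa [Function.comp_def] using this
    have h2 : HasDerivAt (fun s' : ℝ => ψ (σ, ψ (s', y)))
        (((F (σ, y)).comp (ContinuousLinearMap.inr ℝ ℝ E)) (W y)) 0 := by
      have hinner : HasDerivAt (fun s' : ℝ => ψ (s', y)) (W y) 0 := by
        have := hflowderiv 0 y
        rwa [hflow0 y] at this
      have := (hD σ (ψ (0, y))).comp_hasDerivAt 0 hinner
      simpa [hflow0, Function.comp_def] using this
    have heq : (fun s' : ℝ => ψ (σ + s', y)) = fun s' : ℝ => ψ (σ, ψ (s', y)) := by
      funext s'; exact hflowadd σ s' y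
    rw [heq] at h1
    have := h2.unique h1
    simpa using this
  -- the function g and its derivative
  set g : ℝ → E := fun s => ψ (t - s, x s) with hg
  have hxc : ContinuousOn x (Set.Icc 0 t) := fun s hs => ((hx s hs).continuousAt).continuousWithinAt
  set f : ℝ → E := fun s => (fderiv ℝ (fun y : E => ψ (t - s, y)) (x s)) (W (x s) - V (x s))
    with hf
  have hf' : ∀ s, f s = F (t - s, x s) (0, W (x s) - V (x s)) := by
    intro s; rw [hf]; simp only [hDfderiv]; rfl
  have hgderiv : ∀ s ∈ Set.Icc (0 : ℝ) t, HasDerivAt g (-(f s)) s := by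
    intro s hs
    have hinner : HasDerivAt (fun s : ℝ => ((t - s : ℝ), x s)) ((-1 : ℝ), V (x s)) s := by
      have := (((hasDerivAt_const s t).sub (hasDerivAt_id s))).prodMk (hx s hs)
      simpa using this
    have h1 : HasDerivAt g (F (t - s, x s) (-1, V (x s))) s :=
      (hdiff (t - s, x s)).hasFDerivAt.comp_hasDerivAt s hinner
    have : F (t - s, x s) (-1, V (x s)) = -(f s) := by
      rw [hf' s]
      have e1 : ((-1 : ℝ), V (x s)) = -((1 : ℝ), (0 : E)) + ((0 : ℝ), V (x s)) := by
        simp [Prod.ext_iff]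
      have e2 : ((0 : ℝ), W (x s) - V (x s)) = ((0:ℝ), W (x s)) - ((0:ℝ), V (x s)) := by
        simp [Prod.ext_iff]
      rw [e1, e2, map_add, map_neg, map_sub, hT, hkey]
      abel
    rwa [this] at h1
  -- integrability of f
  have hfc : ContinuousOn f (Set.Icc 0 t) := by
    have h1 : ContinuousOn (fun s => F (t - s, x s)) (Set.Icc 0 t) :=
      hFcont.comp_continuousOn (((continuous_const.sub continuous_id).continuousOn).prodMk hxc)
    have h2 : ContinuousOn (fun s => ((0:ℝ), W (x s) - V (x s))) (Set.Icc 0 t) :=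
      continuousOn_const.prodMk ((hWcont.comp_continuousOn hxc).sub (hV.comp_continuousOn hxc))
    have := h1.clm_apply h2
    simpa only [← hf'] using this
  have hint : IntervalIntegrable f volume 0 t := by
    apply ContinuousOn.intervalIntegrable
    rwa [Set.uIcc_of_le ht.le]
  have hFTC := intervalIntegral.integral_eq_sub_of_hasDerivAt
    (f := g) (f' := fun s => -(f s))
    (by rw [Set.uIcc_of_le ht.le]; exact hgderiv) hint.neg
  rw [intervalIntegral.integral_neg] at hFTC
  have hg0 : g 0 = ψ (t, x 0) := by simp [hg]
  have hgt : g t = x t := by simp [hg, hflow0]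
  rw [hg0, hgt] at hFTC
  have : ∫ s in (0:ℝ)..t, f s = ψ (t, x 0) - x t := by
    have h := congrArg Neg.neg hFTC
    have h2 : ψ (t, x 0) - x t = ∫ s in (0:ℝ)..t, f s := by simpa [neg_sub] using h.symm
    exact h2.symm
  rw [this]
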